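/- Spectral decomposition of the N-walk transfer matrices: under the one-walk Bethe hypotheses, for all appropriate y, y': (T_N^{oe})_{y,y'} = Σ_{k ∈ K_N} Λ_k Φ^o_k(y) Ψ^e_k(y')*, (T_N^{eo})_{y,y'} = Σ_{k ∈ K_N} Λ_k Φ^e_k(y) Ψ^o_k(y')*, (T_N^{e·e})_{y,y'} = Σ_{k ∈ K_N} Λ_k² Φ^e_k(y) Ψ^e_k(y')*, and (T_N^{o·o})_{y,y'} = Σ_{k ∈ K_N} Λ_k² Φ^o_k(y) Ψ^o_k(y')*, where T_N^{e·e} = T_N^{eo} T_N^{oe} and T_N^{o·o} = T_N^{oe} T_N^{eo}. -/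

import Mathlib

open Finset BigOperators
open scoped Classical

noncomputable section

/-- The odd sites of the strip: `{y : 1 ≤ y ≤ L, y odd}`. -/
def SetO (L : ℤ) : Finset ℤ := (Finset.Icc 1 L).filter (fun y => Odd y)

/-- The even sites of the strip: `{y : 0 ≤ y ≤ L, y even}`. -/
def SetE (L : ℤ) : Finset ℤ := (Finset.Icc 0 L).filter (fun y => Even y)

/-- Parity-indexed site sets: `true ↦ odd`, `false ↦ even`. -/
def Sp (L : ℤ) : Bool → Finset ℤ := fun p => if p then SetO L else SetE L

/-- Strictly increasing `N`-tuples with entries in `S`. -/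
def UU {α : Type*} [LinearOrder α] (S : Finset α) (N : ℕ) : Finset (Fin N → α) :=
  (Fintype.piFinset (fun _ => S)).filter (fun y => ∀ i j : Fin N, i < j → y i < y j)

/-- One-step transfer matrix entry: `w y y'` when `|y - y'| = 1`, and `0` otherwise. -/
def T1 (w : ℤ → ℤ → ℂ) (y y' : ℤ) : ℂ := if |y - y'| = 1 then w y y' else 0

/-- `N`-walk transfer matrix entry: product of one-step entries. -/
def TN (w : ℤ → ℤ → ℂ) {N : ℕ} (y y' : Fin N → ℤ) : ℂ := ∏ i, T1 w (y i) (y' i)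

/-- Powers of a matrix indexed by a finite set `S`. -/
def matPow {α : Type*} [DecidableEq α] (S : Finset α) (M : α → α → ℂ) : ℕ → α → α → ℂ
  | 0 => fun y y' => if y = y' then 1 else 0
  | r + 1 => fun y y' => ∑ z ∈ S, matPow S M r y z * M z y'

/-- Weight of a family of `N` walks of length `t`. -/
def walkWeight (w : ℤ → ℤ → ℂ) (v : ℤ → ℂ) {N t : ℕ} (y : Fin N → Fin (t + 1) → ℤ) : ℂ :=
  (∏ j, v (y j 0)) * ∏ m : Fin t, ∏ j, w (y j m.castSucc) (y j m.succ)

/-- The constraints on families of non-intersecting walks in the strip `0 ≤ y ≤ L`. -/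
def stripCond (L : ℤ) {N t : ℕ} (yi yf : Fin N → ℤ) (y : Fin N → Fin (t + 1) → ℤ) : Prop :=
  (∀ j, y j 0 = yi j) ∧ (∀ j, y j (Fin.last t) = yf j) ∧
    (∀ j m, 0 ≤ y j m ∧ y j m ≤ L) ∧
    (∀ j, ∀ m : Fin t, y j m.succ = y j m.castSucc + 1 ∨ y j m.succ = y j m.castSucc - 1) ∧
    (∀ m, ∀ i j : Fin N, i < j → y i m < y j m)

/-- The `N`-walk strip generating function `Z^N_t(y^i → y^f)`. -/
def Zgen (L : ℤ) (w : ℤ → ℤ → ℂ) (v : ℤ → ℂ) (N t : ℕ) (yi yf : Fin N → ℤ) : ℂ :=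
  ∑ y ∈ (Fintype.piFinset
      (fun _ : Fin N => Fintype.piFinset (fun _ : Fin (t + 1) => Finset.Icc 0 L))).filter
        (stripCond L yi yf), walkWeight w v y

/-- The constraints on families of non-intersecting walks with a single wall `y ≥ 0`. -/
def barCond {N t : ℕ} (yi yf : Fin N → ℤ) (y : Fin N → Fin (t + 1) → ℤ) : Prop :=
  (∀ j, y j 0 = yi j) ∧ (∀ j, y j (Fin.last t) = yf j) ∧
    (∀ j m, 0 ≤ y j m) ∧
    (∀ j, ∀ m : Fin t, y j m.succ = y j m.castSucc + 1 ∨ y j m.succ = y j m.castSucc - 1) ∧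
    (∀ m, ∀ i j : Fin N, i < j → y i m < y j m)

/-- The one-wall `N`-walk generating function `Z̄^N_t(y^i → y^f)`. -/
def Zbar (w : ℤ → ℤ → ℂ) (v : ℤ → ℂ) (N t : ℕ) (yi yf : Fin N → ℤ) : ℂ :=
  ∑ᶠ (y : Fin N → Fin (t + 1) → ℤ) (_ : barCond yi yf y), walkWeight w v y

/-- The Bethe Ansatz determinant built from a family of one-walk vectors. -/
def BA {K X : Type*} {N : ℕ} (φ : K → X → ℂ) (k : Fin N → K) (y : Fin N → X) : ℂ :=
  ∑ σ : Equiv.Perm (Fin N), ((Equiv.Perm.sign σ : ℤ) : ℂ) * ∏ a, φ (k (σ a)) (y a)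

end

section BetheAux

open Equiv Matrix

lemma mem_UU_iff {α : Type*} [LinearOrder α] {S : Finset α} {N : ℕ} {y : Fin N → α} :
    y ∈ UU S N ↔ (∀ i, y i ∈ S) ∧ StrictMono y := by
  simp only [UU, Finset.mem_filter, Fintype.mem_piFinset]
  exact and_congr_right fun _ => ⟨fun h i j hij => h i j hij, fun h i j hij => h hij⟩

lemma BA_eq_det {K X : Type*} {N : ℕ} (φ : K → X → ℂ) (k : Fin N → K) (y : Fin N → X) :
    BA φ k y = (Matrix.of fun a b => φ (k a) (y b)).det := by
  rw [Matrix.det_apply']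
  rfl

lemma star_BA {K X : Type*} {N : ℕ} (ψ : K → X → ℂ) (k : Fin N → K) (y : Fin N → X) :
    star (BA ψ k y) = BA (fun q x => star (ψ q x)) k y := by
  simp [BA, star_sum, star_prod, star_mul', star_intCast]

lemma Perm.eq_one_of_strictMono {N : ℕ} (σ : Equiv.Perm (Fin N)) (h : StrictMono ⇑σ) :
    σ = 1 := by
  have hid : StrictMono (id : Fin N → Fin N) := strictMono_id
  have : ⇑σ = id := (h.range_inj hid).mp
    (by rw [σ.surjective.range_eq, Set.range_id])
  exact Equiv.ext fun x => congrFun this x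

lemma cauchyBinet {α : Type*} [LinearOrder α] {N : ℕ} (S : Finset α)
    (A : Fin N → α → ℂ) (B : α → Fin N → ℂ) :
    (Matrix.of fun a b => ∑ z ∈ S, A a z * B z b).det
      = ∑ z ∈ UU S N,
          (Matrix.of fun a b => A a (z b)).det * (Matrix.of fun a b => B (z a) b).det := by
  classical
  set F : (Fin N → α) → ℂ :=
    fun f => (Matrix.of fun a b => A a (f b)).det * ∏ b, B (f b) b with hF
  have step1 : (Matrix.of fun a b => ∑ z ∈ S, A a z * B z b).det
      = ∑ f ∈ Fintype.piFinset (fun _ : Fin N => S), F f := by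
    rw [Matrix.det_apply']
    have h1 : ∀ σ : Equiv.Perm (Fin N),
        (∏ b, ∑ z ∈ S, A (σ b) z * B z b)
          = ∑ f ∈ Fintype.piFinset (fun _ : Fin N => S),
              (∏ b, A (σ b) (f b)) * ∏ b, B (f b) b := by
      intro σ
      rw [Finset.prod_univ_sum]
      exact Finset.sum_congr rfl fun f _ => Finset.prod_mul_distrib
    simp only [Matrix.of_apply, h1, Finset.mul_sum]
    rw [Finset.sum_comm]
    refine Finset.sum_congr rfl fun f _ => ?_
    show _ = (Matrix.of fun a b => A a (f b)).det * ∏ b, B (f b) b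
    rw [Matrix.det_apply', Finset.sum_mul]
    exact Finset.sum_congr rfl fun σ _ => by simp only [Matrix.of_apply]; ring
  have step2 : ∑ f ∈ Fintype.piFinset (fun _ : Fin N => S), F f
      = ∑ f ∈ (Fintype.piFinset (fun _ : Fin N => S)).filter
          (fun f => Function.Injective f), F f := by
    rw [eq_comm]
    refine Finset.sum_filter_of_ne fun f _ hne => ?_
    by_contra hni
    apply hne
    obtain ⟨i, j, hij, hne'⟩ : ∃ i j, f i = f j ∧ i ≠ j := by
      simpa [Function.Injective, not_forall] using hni
    have hdet : (Matrix.of fun a b => A a (f b)).det = 0 := by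
      rw [← Matrix.det_transpose]
      exact Matrix.det_zero_of_row_eq hne' (funext fun a => by simp [hij])
    rw [hF]
    simp [hdet]
  have key : ∀ z : Fin N → α,
      (Matrix.of fun a b => A a (z b)).det * (Matrix.of fun a b => B (z a) b).det
        = ∑ τ : Equiv.Perm (Fin N), F (z ∘ ⇑τ) := by
    intro z
    rw [Matrix.det_apply' (Matrix.of fun a b => B (z a) b), Finset.mul_sum]
    refine Finset.sum_congr rfl fun τ _ => ?_
    have hsub : (Matrix.of fun a b => A a (z (τ b)))
        = (Matrix.of fun a b => A a (z b)).submatrix id ⇑τ := rfl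
    have hFz : F (z ∘ ⇑τ) = (Matrix.of fun a b => A a (z (τ b))).det * ∏ b, B (z (τ b)) b := rfl
    rw [hFz, hsub, Matrix.det_permute']
    simp only [Matrix.of_apply]
    ring
  have step3 : ∑ f ∈ (Fintype.piFinset (fun _ : Fin N => S)).filter
        (fun f => Function.Injective f), F f
      = ∑ p ∈ (UU S N) ×ˢ (Finset.univ : Finset (Equiv.Perm (Fin N))),
          F (p.1 ∘ ⇑p.2) := by
    rw [eq_comm]
    refine Finset.sum_bij (fun p _ => p.1 ∘ ⇑p.2) ?_ ?_ ?_ ?_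
    · rintro ⟨z, τ⟩ hp
      rw [Finset.mem_product] at hp
      obtain ⟨hz, hmono⟩ := mem_UU_iff.mp hp.1
      rw [Finset.mem_filter, Fintype.mem_piFinset]
      exact ⟨fun b => hz (τ b), hmono.injective.comp τ.injective⟩
    · rintro ⟨z₁, τ₁⟩ h₁ ⟨z₂, τ₂⟩ h₂ heq
      rw [Finset.mem_product] at h₁ h₂
      have hm₁ := (mem_UU_iff.mp h₁.1).2
      have hm₂ := (mem_UU_iff.mp h₂.1).2
      have heq' : z₁ ∘ ⇑τ₁ = z₂ ∘ ⇑τ₂ := heq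
      have hr : Set.range z₁ = Set.range z₂ := by
        rw [← τ₁.surjective.range_comp z₁, ← τ₂.surjective.range_comp z₂, heq']
      have hz : z₁ = z₂ := (hm₁.range_inj hm₂).mp hr
      subst hz
      have hτ : τ₁ = τ₂ := Equiv.ext fun b =>
        hm₁.injective (congrFun heq' b)
      rw [hτ]
    · intro f hf
      rw [Finset.mem_filter, Fintype.mem_piFinset] at hf
      obtain ⟨hfS, hinj⟩ := hf
      have hcard : (Finset.univ.image f).card = N := by
        rw [Finset.card_image_of_injective _ hinj, Finset.card_univ, Fintype.card_fin]
      set z : Fin N → α := fun b => (Finset.univ.image f).orderEmbOfFin hcard b with hz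
      have hzm : StrictMono z := ((Finset.univ.image f).orderEmbOfFin hcard).strictMono
      have hzr : ∀ b : Fin N, ∃ c, z c = f b := by
        intro b
        have : f b ∈ Set.range z := by
          rw [hz]
          show f b ∈ Set.range ((Finset.univ.image f).orderEmbOfFin hcard)
          rw [Finset.range_orderEmbOfFin]
          exact_mod_cast Finset.mem_image_of_mem f (Finset.mem_univ b)
        exact this
      choose τ0 hτ0 using hzr
      have hτinj : Function.Injective τ0 := fun a b hab => by
        apply hinj
        rw [← hτ0 a, ← hτ0 b, hab]
      have hτbij : Function.Bijective τ0 := Finite.injective_iff_bijective.mp hτinj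
      refine ⟨⟨z, Equiv.ofBijective τ0 hτbij⟩, ?_, ?_⟩
      · rw [Finset.mem_product]
        refine ⟨mem_UU_iff.mpr ⟨fun i => ?_, hzm⟩, Finset.mem_univ _⟩
        show z i ∈ S
        have : z i ∈ Finset.univ.image f := (Finset.univ.image f).orderEmbOfFin_mem hcard i
        obtain ⟨b, _, hb⟩ := Finset.mem_image.mp this
        rw [← hb]
        exact hfS b
      · funext b
        exact hτ0 b
    · intro p _
      rfl
  rw [step1, step2, step3, Finset.sum_product]
  exact Finset.sum_congr rfl fun z _ => (key z).symm

end BetheAux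

section BetheAux2

open Equiv Matrix

lemma det_T1_eq_prod (w : ℤ → ℤ → ℂ) {N : ℕ} (y y' : Fin N → ℤ)
    (hy : ∀ i j : Fin N, i < j → y i + 2 ≤ y j)
    (hy' : ∀ i j : Fin N, i < j → y' i + 2 ≤ y' j) :
    (Matrix.of fun a b => T1 w (y a) (y' b)).det = TN w y y' := by
  rw [Matrix.det_apply']
  refine (Finset.sum_eq_single (1 : Equiv.Perm (Fin N)) ?_ ?_).trans ?_
  · intro σ _ hσ
    rcases eq_or_ne (∏ b, (Matrix.of fun a b => T1 w (y a) (y' b)) (σ b) b) 0 with h0 | h0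
    · rw [h0, mul_zero]
    exfalso
    have hfac : ∀ b, T1 w (y (σ b)) (y' b) ≠ 0 := fun b =>
      Finset.prod_ne_zero_iff.mp h0 b (Finset.mem_univ b)
    have habs : ∀ b, |y (σ b) - y' b| = 1 := by
      intro b
      by_contra hb
      exact hfac b (by simp [T1, hb])
    have hmono : StrictMono ⇑σ := by
      intro a b hab
      by_contra hc
      have hlt : σ b < σ a :=
        lt_of_le_of_ne (not_lt.mp hc) fun e => absurd (σ.injective e) (ne_of_gt hab)
      have h1 := abs_le.mp (le_of_eq (habs a))
      have h2 := abs_le.mp (le_of_eq (habs b))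
      have h3 := hy (σ b) (σ a) hlt
      have h4 := hy' a b hab
      omega
    exact hσ (Perm.eq_one_of_strictMono σ hmono)
  · intro h; exact absurd (Finset.mem_univ _) h
  · simp [TN]

lemma gap_of_UU_O {L : ℤ} {N : ℕ} {y : Fin N → ℤ} (hy : y ∈ UU (SetO L) N) :
    ∀ i j : Fin N, i < j → y i + 2 ≤ y j := by
  obtain ⟨hmem, hmono⟩ := mem_UU_iff.mp hy
  intro i j hij
  have hi : Odd (y i) := (Finset.mem_filter.mp (hmem i)).2
  have hj : Odd (y j) := (Finset.mem_filter.mp (hmem j)).2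
  have hlt := hmono hij
  obtain ⟨a, ha⟩ := hi
  obtain ⟨b, hb⟩ := hj
  omega

lemma gap_of_UU_E {L : ℤ} {N : ℕ} {y : Fin N → ℤ} (hy : y ∈ UU (SetE L) N) :
    ∀ i j : Fin N, i < j → y i + 2 ≤ y j := by
  obtain ⟨hmem, hmono⟩ := mem_UU_iff.mp hy
  intro i j hij
  have hi : Even (y i) := (Finset.mem_filter.mp (hmem i)).2
  have hj : Even (y j) := (Finset.mem_filter.mp (hmem j)).2
  have hlt := hmono hij
  obtain ⟨a, ha⟩ := hi
  obtain ⟨b, hb⟩ := hj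
  omega

lemma one_step_spec {K : Type*} [Fintype K] (T : ℤ → ℤ → ℂ) (Sa Sb : Finset ℤ)
    (φa φb ψb : K → ℤ → ℂ) (lam : K → ℂ)
    (hT : ∀ k, ∀ y ∈ Sa, ∑ z ∈ Sb, T y z * φb k z = lam k * φa k y)
    (hcomp : ∀ z ∈ Sb, ∀ z' ∈ Sb, ∑ k : K, φb k z * star (ψb k z') = if z = z' then 1 else 0)
    {y y' : ℤ} (hy : y ∈ Sa) (hy' : y' ∈ Sb) :
    T y y' = ∑ k : K, lam k * φa k y * star (ψb k y') := by
  classical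
  have h1 : ∑ k : K, lam k * φa k y * star (ψb k y')
      = ∑ k : K, ∑ z ∈ Sb, (T y z * φb k z) * star (ψb k y') := by
    refine Finset.sum_congr rfl fun k _ => ?_
    rw [← Finset.sum_mul, hT k y hy]
  rw [h1, Finset.sum_comm]
  have h2 : ∀ z ∈ Sb, (∑ k : K, (T y z * φb k z) * star (ψb k y'))
      = T y z * (if z = y' then 1 else 0) := by
    intro z hz
    rw [← hcomp z hz y' hy', Finset.mul_sum]
    exact Finset.sum_congr rfl fun k _ => by ring
  rw [Finset.sum_congr rfl h2]
  simp only [mul_ite, mul_one, mul_zero]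
  rw [Finset.sum_ite_eq' Sb y' (fun z => T y z)]
  simp [hy']

lemma TN_spec {K : Type*} [Fintype K] [LinearOrder K] (w : ℤ → ℤ → ℂ)
    (Sa Sb : Finset ℤ) (φa ψb : K → ℤ → ℂ) (lam : K → ℂ)
    (hstep : ∀ y ∈ Sa, ∀ y' ∈ Sb, T1 w y y' = ∑ k : K, lam k * φa k y * star (ψb k y'))
    {N : ℕ} {y y' : Fin N → ℤ} (hy : y ∈ UU Sa N) (hy' : y' ∈ UU Sb N)
    (hgy : ∀ i j : Fin N, i < j → y i + 2 ≤ y j)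
    (hgy' : ∀ i j : Fin N, i < j → y' i + 2 ≤ y' j) :
    TN w y y' = ∑ k ∈ UU (Finset.univ : Finset K) N,
      (∏ a, lam (k a)) * BA φa k y * star (BA ψb k y') := by
  classical
  rw [← det_T1_eq_prod w y y' hgy hgy']
  have hEq : (Matrix.of fun a b => T1 w (y a) (y' b))
      = Matrix.of fun a b => ∑ k ∈ (Finset.univ : Finset K),
          (fun a z => lam z * φa z (y a)) a k * (fun z b => star (ψb z (y' b))) k b := by
    ext a b
    simp only [Matrix.of_apply]
    rw [hstep (y a) ((mem_UU_iff.mp hy).1 a) (y' b) ((mem_UU_iff.mp hy').1 b)]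
  rw [hEq, cauchyBinet]
  refine Finset.sum_congr rfl fun k hk => ?_
  have h1 : (Matrix.of fun a b => (fun a z => lam z * φa z (y a)) a (k b)).det
      = (∏ a, lam (k a)) * BA φa k y := by
    rw [← Matrix.det_transpose]
    have ht : (Matrix.of fun a b => (fun a z => lam z * φa z (y a)) a (k b))ᵀ
        = Matrix.of fun i j => lam (k i) * (Matrix.of fun i j => φa (k i) (y j)) i j := rfl
    rw [ht, Matrix.det_mul_column, ← BA_eq_det]
  have h2 : (Matrix.of fun a b => (fun z b => star (ψb z (y' b))) (k a) b).det
      = star (BA ψb k y') := by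
    rw [star_BA, BA_eq_det]
  rw [h1, h2]

lemma BA_orth {K : Type*} [Fintype K] [LinearOrder K] (S : Finset ℤ) (φ ψ : K → ℤ → ℂ)
    (hort : ∀ k k' : K, ∑ z ∈ S, star (ψ k z) * φ k' z = if k = k' then 1 else 0)
    {N : ℕ} {k k' : Fin N → K} (hk : k ∈ UU (Finset.univ : Finset K) N)
    (hk' : k' ∈ UU (Finset.univ : Finset K) N) :
    ∑ z ∈ UU S N, star (BA ψ k z) * BA φ k' z = if k = k' then 1 else 0 := by
  classical
  have hkm : StrictMono k := (mem_UU_iff.mp hk).2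
  have hkm' : StrictMono k' := (mem_UU_iff.mp hk').2
  have hCB := cauchyBinet S (fun a z => star (ψ (k a) z)) (fun z b => φ (k' b) z)
  have hL : ∑ z ∈ UU S N, star (BA ψ k z) * BA φ k' z
      = (Matrix.of fun a b => ∑ z ∈ S, (fun a z => star (ψ (k a) z)) a z *
          (fun z b => φ (k' b) z) z b).det := by
    rw [hCB]
    refine Finset.sum_congr rfl fun z _ => ?_
    congr 1
    · rw [star_BA, BA_eq_det]
    · rw [BA_eq_det, ← Matrix.det_transpose]
      rfl
  rw [hL]
  have hmat : (Matrix.of fun a b => ∑ z ∈ S, (fun a z => star (ψ (k a) z)) a z *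
          (fun z b => φ (k' b) z) z b)
      = Matrix.of (fun a b => if k a = k' b then (1 : ℂ) else 0) := by
    ext a b
    exact hort (k a) (k' b)
  rw [hmat]
  by_cases hkk : k = k'
  · subst hkk
    rw [if_pos rfl]
    have : Matrix.of (fun a b => if k a = k b then (1 : ℂ) else 0) = (1 : Matrix (Fin N) (Fin N) ℂ) := by
      ext a b
      rw [Matrix.of_apply, Matrix.one_apply]
      simp [hkm.injective.eq_iff]
    rw [this, Matrix.det_one]
  · rw [if_neg hkk]
    have himg : Finset.image k Finset.univ ≠ Finset.image k' Finset.univ := by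
      intro h
      apply hkk
      refine (hkm.range_inj hkm').mp ?_
      rw [← Set.image_univ, ← Set.image_univ, ← Finset.coe_univ, ← Finset.coe_image,
        ← Finset.coe_image, h]
    have hnsub : ¬ Finset.image k Finset.univ ⊆ Finset.image k' Finset.univ := by
      intro hsub
      apply himg
      refine Finset.eq_of_subset_of_card_le hsub ?_
      rw [Finset.card_image_of_injective _ hkm'.injective,
        Finset.card_image_of_injective _ hkm.injective]
    obtain ⟨x, hx, hx'⟩ := Finset.not_subset.mp hnsub
    obtain ⟨a, _, ha⟩ := Finset.mem_image.mp hx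
    refine Matrix.det_eq_zero_of_row_eq_zero a fun b => ?_
    rw [Matrix.of_apply, if_neg]
    intro he
    exact hx' (Finset.mem_image.mpr ⟨b, Finset.mem_univ b, by rw [← he, ha]⟩)

end BetheAux2


/-- spectral decomposition of the `N`-walk transfer matrices. -/
theorem bethe_spectral_decomposition (L : ℤ) (hL : Odd L) (hL1 : 1 ≤ L) (w : ℤ → ℤ → ℂ)
    (K : Type*) [Fintype K] [LinearOrder K] (hK : Fintype.card K = ((L + 1) / 2).toNat)
    (φo φe ψo ψe : K → ℤ → ℂ) (lam : K → ℂ)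
    (heo : ∀ k, ∀ y ∈ SetE L, ∑ y' ∈ SetO L, T1 w y y' * φo k y' = lam k * φe k y)
    (hoe : ∀ k, ∀ y ∈ SetO L, ∑ y' ∈ SetE L, T1 w y y' * φe k y' = lam k * φo k y)
    (horto : ∀ k k' : K, ∑ y ∈ SetO L, star (ψo k y) * φo k' y = if k = k' then 1 else 0)
    (horte : ∀ k k' : K, ∑ y ∈ SetE L, star (ψe k y) * φe k' y = if k = k' then 1 else 0)
    (hcompo : ∀ y ∈ SetO L, ∀ y' ∈ SetO L,
      ∑ k : K, φo k y * star (ψo k y') = if y = y' then 1 else 0)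
    (hcompe : ∀ y ∈ SetE L, ∀ y' ∈ SetE L,
      ∑ k : K, φe k y * star (ψe k y') = if y = y' then 1 else 0)
    (N : ℕ) (hN : 1 ≤ N) :
    (∀ y ∈ UU (SetO L) N, ∀ y' ∈ UU (SetE L) N,
        TN w y y' =
          ∑ k ∈ UU (Finset.univ : Finset K) N,
            (∏ a, lam (k a)) * BA φo k y * star (BA ψe k y')) ∧
    (∀ y ∈ UU (SetE L) N, ∀ y' ∈ UU (SetO L) N,
        TN w y y' =
          ∑ k ∈ UU (Finset.univ : Finset K) N,
            (∏ a, lam (k a)) * BA φe k y * star (BA ψo k y')) ∧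
    (∀ y ∈ UU (SetE L) N, ∀ y' ∈ UU (SetE L) N,
        ∑ z ∈ UU (SetO L) N, TN w y z * TN w z y' =
          ∑ k ∈ UU (Finset.univ : Finset K) N,
            (∏ a, lam (k a)) ^ 2 * BA φe k y * star (BA ψe k y')) ∧
    (∀ y ∈ UU (SetO L) N, ∀ y' ∈ UU (SetO L) N,
        ∑ z ∈ UU (SetE L) N, TN w y z * TN w z y' =
          ∑ k ∈ UU (Finset.univ : Finset K) N,
            (∏ a, lam (k a)) ^ 2 * BA φo k y * star (BA ψo k y')) := by
  classical
  have hstep_oe : ∀ y ∈ SetO L, ∀ y' ∈ SetE L,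
      T1 w y y' = ∑ k : K, lam k * φo k y * star (ψe k y') :=
    fun y hy y' hy' => one_step_spec (T1 w) (SetO L) (SetE L) φo φe ψe lam hoe hcompe hy hy'
  have hstep_eo : ∀ y ∈ SetE L, ∀ y' ∈ SetO L,
      T1 w y y' = ∑ k : K, lam k * φe k y * star (ψo k y') :=
    fun y hy y' hy' => one_step_spec (T1 w) (SetE L) (SetO L) φe φo ψo lam heo hcompo hy hy'
  have part1 : ∀ y ∈ UU (SetO L) N, ∀ y' ∈ UU (SetE L) N,
      TN w y y' = ∑ k ∈ UU (Finset.univ : Finset K) N,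
        (∏ a, lam (k a)) * BA φo k y * star (BA ψe k y') :=
    fun y hy y' hy' => TN_spec w (SetO L) (SetE L) φo ψe lam hstep_oe hy hy'
      (gap_of_UU_O hy) (gap_of_UU_E hy')
  have part2 : ∀ y ∈ UU (SetE L) N, ∀ y' ∈ UU (SetO L) N,
      TN w y y' = ∑ k ∈ UU (Finset.univ : Finset K) N,
        (∏ a, lam (k a)) * BA φe k y * star (BA ψo k y') :=
    fun y hy y' hy' => TN_spec w (SetE L) (SetO L) φe ψo lam hstep_eo hy hy'
      (gap_of_UU_E hy) (gap_of_UU_O hy')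
  refine ⟨part1, part2, ?_, ?_⟩
  · intro y hy y' hy'
    calc ∑ z ∈ UU (SetO L) N, TN w y z * TN w z y'
        = ∑ z ∈ UU (SetO L) N, ∑ k ∈ UU (Finset.univ : Finset K) N,
            ∑ k' ∈ UU (Finset.univ : Finset K) N,
            ((∏ a, lam (k a)) * BA φe k y * star (BA ψo k z)) *
              ((∏ a, lam (k' a)) * BA φo k' z * star (BA ψe k' y')) := by
          refine Finset.sum_congr rfl fun z hz => ?_
          rw [part2 y hy z hz, part1 z hz y' hy', Finset.sum_mul_sum]
      _ = ∑ k ∈ UU (Finset.univ : Finset K) N, ∑ k' ∈ UU (Finset.univ : Finset K) N,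
            ((∏ a, lam (k a)) * BA φe k y) * ((∏ a, lam (k' a)) * star (BA ψe k' y')) *
              (∑ z ∈ UU (SetO L) N, star (BA ψo k z) * BA φo k' z) := by
          rw [Finset.sum_comm]
          refine Finset.sum_congr rfl fun k hk => ?_
          rw [Finset.sum_comm]
          refine Finset.sum_congr rfl fun k' hk' => ?_
          rw [Finset.mul_sum]
          exact Finset.sum_congr rfl fun z hz => by ring
      _ = ∑ k ∈ UU (Finset.univ : Finset K) N,
            (∏ a, lam (k a)) ^ 2 * BA φe k y * star (BA ψe k y') := by
          refine Finset.sum_congr rfl fun k hk => ?_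
          have horth : ∀ k' ∈ UU (Finset.univ : Finset K) N,
              ((∏ a, lam (k a)) * BA φe k y) * ((∏ a, lam (k' a)) * star (BA ψe k' y')) *
                  (∑ z ∈ UU (SetO L) N, star (BA ψo k z) * BA φo k' z)
                = ((∏ a, lam (k a)) * BA φe k y) *
                    ((∏ a, lam (k' a)) * star (BA ψe k' y')) *
                    (if k = k' then 1 else 0) := fun k' hk' => by
            rw [BA_orth (SetO L) φo ψo horto hk hk']
          rw [Finset.sum_congr rfl horth]
          simp only [mul_ite, mul_one, mul_zero]
          rw [Finset.sum_ite_eq (UU (Finset.univ : Finset K) N) k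
            (fun k' => ((∏ a, lam (k a)) * BA φe k y) *
              ((∏ a, lam (k' a)) * star (BA ψe k' y'))), if_pos hk]
          ring
  · intro y hy y' hy'
    calc ∑ z ∈ UU (SetE L) N, TN w y z * TN w z y'
        = ∑ z ∈ UU (SetE L) N, ∑ k ∈ UU (Finset.univ : Finset K) N,
            ∑ k' ∈ UU (Finset.univ : Finset K) N,
            ((∏ a, lam (k a)) * BA φo k y * star (BA ψe k z)) *
              ((∏ a, lam (k' a)) * BA φe k' z * star (BA ψo k' y')) := by
          refine Finset.sum_congr rfl fun z hz => ?_
          rw [part1 y hy z hz, part2 z hz y' hy', Finset.sum_mul_sum]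
      _ = ∑ k ∈ UU (Finset.univ : Finset K) N, ∑ k' ∈ UU (Finset.univ : Finset K) N,
            ((∏ a, lam (k a)) * BA φo k y) * ((∏ a, lam (k' a)) * star (BA ψo k' y')) *
              (∑ z ∈ UU (SetE L) N, star (BA ψe k z) * BA φe k' z) := by
          rw [Finset.sum_comm]
          refine Finset.sum_congr rfl fun k hk => ?_
          rw [Finset.sum_comm]
          refine Finset.sum_congr rfl fun k' hk' => ?_
          rw [Finset.mul_sum]
          exact Finset.sum_congr rfl fun z hz => by ring
      _ = ∑ k ∈ UU (Finset.univ : Finset K) N,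
            (∏ a, lam (k a)) ^ 2 * BA φo k y * star (BA ψo k y') := by
          refine Finset.sum_congr rfl fun k hk => ?_
          have horth : ∀ k' ∈ UU (Finset.univ : Finset K) N,
              ((∏ a, lam (k a)) * BA φo k y) * ((∏ a, lam (k' a)) * star (BA ψo k' y')) *
                  (∑ z ∈ UU (SetE L) N, star (BA ψe k z) * BA φe k' z)
                = ((∏ a, lam (k a)) * BA φo k y) *
                    ((∏ a, lam (k' a)) * star (BA ψo k' y')) *
                    (if k = k' then 1 else 0) := fun k' hk' => by
            rw [BA_orth (SetE L) φe ψe horte hk hk']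
          rw [Finset.sum_congr rfl horth]
          simp only [mul_ite, mul_one, mul_zero]
          rw [Finset.sum_ite_eq (UU (Finset.univ : Finset K) N) k
            (fun k' => ((∏ a, lam (k a)) * BA φo k y) *
              ((∏ a, lam (k' a)) * star (BA ψo k' y'))), if_pos hk]
          ring
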